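/- Greedy selection gives a 2-approximation for OSM: let π be the action sequence built by iteratively appending the remaining agent i maximizing v_i(current prefix). Then 2·SW(π) ≥ SW(π̂) for every action sequence π̂. Key combinatorial fact: if M and M̂ are the perfect matchings produced by π and π̂ respectively, then for every agent i whose matched item differs between M and M̂, the edge e_i = (i, μ_i(π̂^i)) ∈ M̂ satisfies w(e_i) ≤ w(e_i^+) + w(e_i^-), where e_i^+ and e_i^- are the two edges of M incident to the endpoints of e_i. -/
import Mathlib


/-- The agents that precede `i` in the action (sub)sequence `π`. -/
def prefixBefore {n : ℕ} (π : List (Fin n)) (i : Fin n) : List (Fin n) :=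
  π.takeWhile (fun j => j != i)

/-- A full action sequence: an ordering of all `n` agents. -/
def IsSeq {n : ℕ} (π : List (Fin n)) : Prop :=
  π.Nodup ∧ ∀ i : Fin n, i ∈ π

/-- Social welfare of a full action sequence. -/
noncomputable def SW {n : ℕ} (v : Fin n → List (Fin n) → ℝ) (π : List (Fin n)) : ℝ :=
  ∑ i : Fin n, v i (prefixBefore π i)

lemma aux_prefix {n : ℕ} (l : List (Fin n)) (hl : l.Nodup) (m : ℕ) (hm : m < l.length) :
    prefixBefore l (l.get ⟨m, hm⟩) = l.take m := by
  induction l generalizing m with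
  | nil => simp at hm
  | cons a t ih =>
    cases m with
    | zero => simp [prefixBefore, List.takeWhile_cons]
    | succ m' =>
      have hm' : m' < t.length := by simpa using hm
      have ha : a ∉ t := (List.nodup_cons.mp hl).1
      have hmem : (t.get ⟨m', hm'⟩) ∈ t := List.get_mem ..
      have hne : a ≠ t.get ⟨m', hm'⟩ := fun h => ha (h ▸ hmem)
      have : (a :: t).get ⟨m' + 1, hm⟩ = t.get ⟨m', hm'⟩ := rfl
      rw [this]
      simp only [prefixBefore, List.takeWhile_cons, List.take_succ_cons]
      rw [if_pos (by simpa using hne)]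
      rw [← ih (List.nodup_cons.mp hl).2 m' hm']
      rfl

lemma aux_take_nodup {n : ℕ} {l : List (Fin n)} (hl : l.Nodup) (k : ℕ) : (l.take k).Nodup :=
  (List.take_sublist k l).nodup hl

lemma aux_get_notMem_take {n : ℕ} {l : List (Fin n)} (hl : l.Nodup) {m : ℕ} (hm : m < l.length) :
    l.get ⟨m, hm⟩ ∉ l.take m := by
  intro hmem
  obtain ⟨⟨j, hj⟩, hget⟩ := List.mem_iff_get.mp hmem
  have hj' : j < m := (by simpa using hj : _ ∧ _).1
  have hjl : j < l.length := hj'.trans hm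
  have : l.get ⟨j, hjl⟩ = l.get ⟨m, hm⟩ := by
    rw [← hget]; simp [List.get_eq_getElem, List.getElem_take]
  have h2 := List.Nodup.get_inj_iff hl |>.mp this
  rw [Fin.mk_eq_mk] at h2
  omega

lemma aux_take_succ_eq {n : ℕ} (l : List (Fin n)) {k : ℕ} (hk : k < l.length) :
    l.take (k + 1) = l.take k ++ [l.get ⟨k, hk⟩] := by
  rw [List.take_succ, List.getElem?_eq_getElem hk]
  rfl

/-- greedy selection is a 2-approximation for OSM. The OSM structure is
given by `μ` (item picked) and `μset` (set of picked items) as in the monotonicity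
lemma; `v i S = w i (μ i S)`. The sequence `π` is greedy: the agent placed at each
position `k` has maximum value, after the length-`k` prefix, among all agents placed
at positions `≥ k`. Conclusion: `SW π̂ ≤ 2 ⬝ SW π` for every action sequence `π̂`. -/
theorem stmt6 {n : ℕ}
    (r : Fin n → Fin n → ℕ) (hr : ∀ i, Function.Injective (r i))
    (w : Fin n → Fin n → ℝ) (hw0 : ∀ i j, 0 ≤ w i j)
    (hwr : ∀ i j j', r i j < r i j' → w i j' ≤ w i j)
    (μ : Fin n → List (Fin n) → Fin n) (μset : List (Fin n) → Finset (Fin n))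
    (hset0 : μset [] = ∅)
    (hsetS : ∀ (S : List (Fin n)) (i : Fin n), S.Nodup → i ∉ S →
        μset (S ++ [i]) = insert (μ i S) (μset S))
    (hμ : ∀ (i : Fin n) (S : List (Fin n)), S.Nodup → i ∉ S →
        μ i S ∉ μset S ∧ ∀ j, j ∉ μset S → r i (μ i S) ≤ r i j)
    (v : Fin n → List (Fin n) → ℝ) (hv : ∀ i S, v i S = w i (μ i S))
    (π : List (Fin n)) (hπ : IsSeq π)
    (hgreedy : ∀ (k : ℕ) (hk : k < π.length), ∀ j ∈ π.drop k,
        v j (π.take k) ≤ v (π.get ⟨k, hk⟩) (π.take k)) :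
    ∀ πhat, IsSeq πhat → SW v πhat ≤ 2 * SW v π := by
  intro πhat hπhat
  -- weight is antitone in rank
  have hrw : ∀ i j j', r i j ≤ r i j' → w i j' ≤ w i j := by
    intro i j j' h
    rcases h.lt_or_eq with h | h
    · exact hwr i j j' h
    · exact le_of_eq (by rw [hr i h])
  -- membership in μset of a prefix
  have hmem : ∀ (l : List (Fin n)), l.Nodup → ∀ k, k ≤ l.length → ∀ x,
      (x ∈ μset (l.take k) ↔ ∃ m, ∃ h : m < l.length, m < k ∧ μ (l.get ⟨m, h⟩) (l.take m) = x) := by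
    intro l hl k
    induction k with
    | zero => intro _ x; simp [hset0]
    | succ k ih =>
      intro hk x
      have hkl : k < l.length := hk
      rw [aux_take_succ_eq l hkl, hsetS _ _ (aux_take_nodup hl k) (aux_get_notMem_take hl hkl),
        Finset.mem_insert, ih hkl.le x]
      constructor
      · rintro (h | ⟨m, hml, hmk, hx⟩)
        · exact ⟨k, hkl, Nat.lt_succ_self k, h.symm⟩
        · exact ⟨m, hml, hmk.trans (Nat.lt_succ_self k), hx⟩
      · rintro ⟨m, hml, hmk, hx⟩
        rcases Nat.lt_succ_iff_lt_or_eq.mp hmk with h | h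
        · exact Or.inr ⟨m, hml, h, hx⟩
        · subst h; exact Or.inl hx.symm
  have hmono : ∀ (l : List (Fin n)), l.Nodup → ∀ k k', k ≤ k' → k' ≤ l.length →
      μset (l.take k) ⊆ μset (l.take k') := by
    intro l hl k k' hkk hk' x hx
    rw [hmem l hl k (hkk.trans hk') x] at hx
    obtain ⟨m, hml, hmk, hxx⟩ := hx
    exact (hmem l hl k' hk' x).mpr ⟨m, hml, hmk.trans_le hkk, hxx⟩
  have hfresh : ∀ (l : List (Fin n)), l.Nodup → ∀ m (hm : m < l.length),
      μ (l.get ⟨m, hm⟩) (l.take m) ∉ μset (l.take m) :=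
    fun l hl m hm => (hμ _ _ (aux_take_nodup hl m) (aux_get_notMem_take hl hm)).1
  have hGne : ∀ (l : List (Fin n)), l.Nodup → ∀ p q (hp : p < l.length) (hq : q < l.length),
      p < q → μ (l.get ⟨p, hp⟩) (l.take p) ≠ μ (l.get ⟨q, hq⟩) (l.take q) := by
    intro l hl p q hp hq hpq heq
    apply hfresh l hl q hq
    rw [← heq]
    exact (hmem l hl q hq.le _).mpr ⟨p, hp, hpq, rfl⟩
  have hGinj : ∀ (l : List (Fin n)), IsSeq l →
      Function.Injective (fun i => μ i (prefixBefore l i)) := by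
    intro l hl i i' h
    by_contra hne
    obtain ⟨⟨k, hk⟩, hgi⟩ := List.mem_iff_get.mp (hl.2 i)
    obtain ⟨⟨k', hk'⟩, hgi'⟩ := List.mem_iff_get.mp (hl.2 i')
    simp only at h
    rw [← hgi, ← hgi', aux_prefix l hl.1 k hk, aux_prefix l hl.1 k' hk'] at h
    rcases lt_trichotomy k k' with hlt | heq | hlt
    · exact hGne l hl.1 k k' hk hk' hlt h
    · subst heq; exact hne (hgi.symm.trans hgi')
    · exact hGne l hl.1 k' k hk' hk hlt h.symm
  set g : Fin n → Fin n := fun i => μ i (prefixBefore π i) with hg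
  set f : Fin n → Fin n := fun i => μ i (prefixBefore πhat i) with hf
  have hgbij : Function.Bijective g := Finite.injective_iff_bijective.mp (hGinj π hπ)
  have hfinj : Function.Injective f := hGinj πhat hπhat
  let eg : Fin n ≃ Fin n := Equiv.ofBijective g hgbij
  set σ : Fin n → Fin n := fun i => eg.symm (f i) with hσ
  have hgσ : ∀ i, g (σ i) = f i := fun i => eg.apply_symm_apply (f i)
  have hσbij : Function.Bijective σ :=
    Finite.injective_iff_bijective.mp (eg.symm.injective.comp hfinj)
  -- key per-agent inequality
  have hkey : ∀ i : Fin n, w i (f i) ≤ w i (g i) + w (σ i) (f i) := by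
    intro i
    obtain ⟨⟨k, hk⟩, hik⟩ := List.mem_iff_get.mp (hπ.2 i)
    obtain ⟨⟨m, hm⟩, ham⟩ := List.mem_iff_get.mp (hπ.2 (σ i))
    have hpk : prefixBefore π i = π.take k := by rw [← hik]; exact aux_prefix π hπ.1 k hk
    have hpm : prefixBefore π (σ i) = π.take m := by rw [← ham]; exact aux_prefix π hπ.1 m hm
    have hgσi : μ (σ i) (π.take m) = f i := by rw [← hpm]; exact hgσ i
    have hfreshm : f i ∉ μset (π.take m) := by
      have := hfresh π hπ.1 m hm
      rw [ham, hgσi] at this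
      exact this
    have hink : i ∉ π.take k := hik ▸ aux_get_notMem_take hπ.1 hk
    rcases le_or_gt k m with hkm | hmk
    · have hnk : f i ∉ μset (π.take k) := fun hx => hfreshm (hmono π hπ.1 k m hkm hm.le hx)
      have hrle := (hμ i (π.take k) (aux_take_nodup hπ.1 k) hink).2 (f i) hnk
      have hle : w i (f i) ≤ w i (g i) := by
        rw [hg]; simp only; rw [hpk]; exact hrw i _ _ hrle
      linarith [hw0 (σ i) (f i)]
    · have hidrop : i ∈ π.drop m := by
        have hklen : k - m < (π.drop m).length := by
          rw [List.length_drop]; omega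
        have hgd : (π.drop m).get ⟨k - m, hklen⟩ = i := by
          rw [← hik]
          simp only [List.get_eq_getElem, List.getElem_drop]
          congr 1
          omega
        rw [← hgd]; exact List.get_mem ..
      have hgr := hgreedy m hm i hidrop
      rw [ham] at hgr
      have hnm : i ∉ π.take m := by
        intro hx
        apply hink
        have : π.take m = (π.take k).take m := by
          rw [List.take_take]; congr 1; omega
        rw [this] at hx
        exact (List.take_sublist m (π.take k)).subset hx
      have hrle := (hμ i (π.take m) (aux_take_nodup hπ.1 m) hnm).2 (f i) hfreshm
      have h1 : w i (f i) ≤ v i (π.take m) := by rw [hv]; exact hrw i _ _ hrle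
      have h2 : v (σ i) (π.take m) = w (σ i) (f i) := by rw [hv, hgσi]
      linarith [hw0 i (g i)]
  have hSWhat : SW v πhat = ∑ i, w i (f i) := by
    unfold SW; exact Finset.sum_congr rfl (fun i _ => hv i _)
  have hSW : SW v π = ∑ i, w i (g i) := by
    unfold SW; exact Finset.sum_congr rfl (fun i _ => hv i _)
  have hsum : ∑ i, w (σ i) (f i) = SW v π := by
    rw [hSW]
    calc ∑ i, w (σ i) (f i) = ∑ i, (fun a => w a (g a)) (σ i) :=
          Finset.sum_congr rfl (fun i _ => by simp only; rw [hgσ i])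
      _ = ∑ a, w a (g a) := hσbij.sum_comp (fun a => w a (g a))
  rw [hSWhat, two_mul]
  calc ∑ i, w i (f i) ≤ ∑ i, (w i (g i) + w (σ i) (f i)) :=
        Finset.sum_le_sum (fun i _ => hkey i)
    _ = ∑ i, w i (g i) + ∑ i, w (σ i) (f i) := Finset.sum_add_distrib
    _ = SW v π + SW v π := by rw [← hSW, hsum]
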